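/- Let γ be an irrational non-Liouville real number. Then for Lebesgue almost every real number β, the numbers 1, γ, β are linearly independent over ℚ and the pair (γ,β) is Diophantine, i.e. there exist c, ρ > 0 such that ‖n₁γ + n₂β‖ ≥ c·max(|n₁|,|n₂|)^{−ρ} for all integers n₁, n₂ not both zero. -/

import Mathlib

open MeasureTheory
open scoped ENNReal

/-- Distance from a real number to the nearest integer. -/
noncomputable def nint (x : ℝ) : ℝ := |x - round x|

lemma nint_nonneg (x : ℝ) : 0 ≤ nint x := abs_nonneg _

lemma nint_le (x : ℝ) (z : ℤ) : nint x ≤ |x - z| := round_le x z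

lemma nint_neg (x : ℝ) : nint (-x) = nint x := by
  apply le_antisymm
  · calc nint (-x) ≤ |(-x) - (-(round x : ℤ) : ℤ)| := nint_le _ _
      _ = nint x := by push_cast; rw [← abs_neg]; unfold nint; ring_nf
  · calc nint x ≤ |x - (-(round (-x) : ℤ) : ℤ)| := nint_le _ _
      _ = nint (-x) := by push_cast; rw [← abs_neg (x - _)]; unfold nint; ring_nf
      
lemma nint_add_int (x : ℝ) (n : ℤ) : nint (x + n) = nint x := by
  unfold nint
  rw [round_add_intCast]
  push_cast
  ring_nf

lemma nint_intCast (n : ℤ) : nint (n : ℝ) = 0 := by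
  unfold nint; rw [round_intCast]; simp

lemma volume_abs_lt (a b ε : ℝ) (ha : a ≠ 0) :
    volume {β : ℝ | |a * β + b| < ε} = ENNReal.ofReal (2 * ε / |a|) := by
  rcases lt_or_gt_of_ne ha with h | h
  · have : {β : ℝ | |a * β + b| < ε} = Set.Ioo ((ε - b)/a) ((-ε - b)/a) := by
      ext β
      simp only [Set.mem_setOf_eq, Set.mem_Ioo, abs_lt]
      rw [div_lt_iff_of_neg h, lt_div_iff_of_neg h]
      constructor <;> rintro ⟨h1, h2⟩ <;> constructor <;> linarith
    rw [this, Real.volume_Ioo, abs_of_neg h]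
    congr 1
    rw [div_neg, div_sub_div_same, ← neg_div]
    congr 1
    ring
  · have : {β : ℝ | |a * β + b| < ε} = Set.Ioo ((-ε - b)/a) ((ε - b)/a) := by
      ext β
      simp only [Set.mem_setOf_eq, Set.mem_Ioo, abs_lt]
      rw [div_lt_iff₀ h, lt_div_iff₀ h]
      constructor <;> rintro ⟨h1, h2⟩ <;> constructor <;> linarith
    rw [this, Real.volume_Ioo, abs_of_pos h]
    congr 1
    field_simp
    ring

lemma volume_nint_lt (θ a ε : ℝ) (ha : 1 ≤ |a|) (hε : 0 < ε) :
    volume {β : ℝ | β ∈ Set.Ico (0:ℝ) 1 ∧ nint (θ + a * β) < ε} ≤ ENNReal.ofReal (12 * ε) := by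
  have ha0 : (0:ℝ) < |a| := lt_of_lt_of_le one_pos ha
  have ha' : a ≠ 0 := by intro h; rw [h, abs_zero] at ha; linarith
  set m₀ : ℤ := ⌈θ - |a| - 1⌉ with hm₀
  set m₁ : ℤ := ⌊θ + |a| + 1⌋ with hm₁
  have hsub : {β : ℝ | β ∈ Set.Ico (0:ℝ) 1 ∧ nint (θ + a * β) < ε} ⊆
      ⋃ m ∈ Finset.Icc m₀ m₁, {β : ℝ | |a * β + (θ - m)| < ε} := by
    rintro β ⟨⟨hβ0, hβ1⟩, hn⟩
    have hab : |a * β| ≤ |a| := by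
      rw [abs_mul]
      calc |a| * |β| ≤ |a| * 1 := by
            apply mul_le_mul_of_nonneg_left _ (abs_nonneg a)
            rw [abs_of_nonneg hβ0]; exact hβ1.le
        _ = |a| := mul_one _
    have hy1 : θ - |a| ≤ θ + a * β := by
      have := neg_abs_le (a * β); have := neg_le_of_abs_le hab; linarith
    have hy2 : θ + a * β ≤ θ + |a| := by
      have := le_abs_self (a * β); linarith
    have hr := abs_sub_round (θ + a * β)
    have hr1 := abs_le.mp hr
    have h1 : round (θ + a * β) ∈ Finset.Icc m₀ m₁ := by
      rw [Finset.mem_Icc]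
      constructor
      · rw [hm₀]; apply Int.ceil_le.mpr; push_cast; linarith [hr1.2]
      · rw [hm₁]; apply Int.le_floor.mpr; push_cast; linarith [hr1.1]
    have h2 : β ∈ {β : ℝ | |a * β + (θ - (round (θ + a * β) : ℤ))| < ε} := by
      show |a * β + (θ - (round (θ + a * β) : ℤ))| < ε
      have heq : a * β + (θ - (round (θ + a * β) : ℤ)) = (θ + a * β) - round (θ + a * β) := by
        push_cast; ring
      rw [heq]
      exact hn
    exact Set.mem_biUnion h1 h2
  calc volume {β : ℝ | β ∈ Set.Ico (0:ℝ) 1 ∧ nint (θ + a * β) < ε}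
      ≤ volume (⋃ m ∈ Finset.Icc m₀ m₁, {β : ℝ | |a * β + (θ - m)| < ε}) :=
        measure_mono hsub
    _ ≤ ∑ m ∈ Finset.Icc m₀ m₁, volume {β : ℝ | |a * β + (θ - m)| < ε} :=
        measure_biUnion_finset_le _ _
    _ = ∑ m ∈ Finset.Icc m₀ m₁, ENNReal.ofReal (2 * ε / |a|) :=
        Finset.sum_congr rfl (fun m _ => volume_abs_lt a (θ - m) ε ha')
    _ = (Finset.Icc m₀ m₁).card * ENNReal.ofReal (2 * ε / |a|) := by
        rw [Finset.sum_const, nsmul_eq_mul]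
    _ ≤ ENNReal.ofReal (12 * ε) := by
        rw [← ENNReal.ofReal_natCast, ← ENNReal.ofReal_mul (by positivity)]
        apply ENNReal.ofReal_le_ofReal
        have hcard : ((Finset.Icc m₀ m₁).card : ℝ) ≤ 2 * |a| + 4 := by
          rw [Int.card_Icc]
          have h1 : ((m₁ + 1 - m₀).toNat : ℤ) = max (m₁ + 1 - m₀) 0 := Int.toNat_eq_max _
          have h2 : ((m₁ + 1 - m₀).toNat : ℝ) = max ((m₁ + 1 - m₀ : ℤ) : ℝ) 0 := by
            rw [← Int.cast_natCast, h1]; push_cast [Int.cast_max]; rfl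
          rw [h2]
          apply max_le _ (by positivity)
          have hf : (m₁ : ℝ) ≤ θ + |a| + 1 := Int.floor_le _
          have hc : θ - |a| - 1 ≤ (m₀ : ℝ) := Int.le_ceil _
          push_cast
          linarith
        have ht : 0 ≤ 2 * ε / |a| := by positivity
        calc ((Finset.Icc m₀ m₁).card : ℝ) * (2 * ε / |a|)
            ≤ (2 * |a| + 4) * (2 * ε / |a|) := mul_le_mul_of_nonneg_right hcard ht
          _ = (2 * |a| + 4) * (2 * ε) / |a| := by field_simp
          _ ≤ 12 * ε := by
              rw [div_le_iff₀ ha0]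
              nlinarith

lemma summable_f {σ : ℝ} (hσ : 1 < σ) :
    Summable (fun n : ℤ => ((n.natAbs + 1 : ℕ) : ℝ) ^ (-σ)) := by
  have hnat : Summable (fun n : ℕ => ((n + 1 : ℕ) : ℝ) ^ (-σ)) := by
    have h0 := Real.summable_nat_rpow_inv.mpr hσ
    have h1 := (summable_nat_add_iff 1).mpr h0
    apply h1.congr
    intro n
    rw [Real.rpow_neg (by positivity)]
  apply Summable.of_nat_of_neg
  · apply hnat.congr; intro n; simp
  · apply hnat.congr; intro n; simp

lemma single_bound {σ : ℝ} (hσ : 0 < σ) {a N : ℝ} (ha : 0 ≤ a) (haN : a ≤ N) (hN : 1 ≤ N) :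
    N ^ (-σ) ≤ 2 ^ σ * (a + 1) ^ (-σ) := by
  have hN0 : (0:ℝ) < N := by linarith
  have ha1 : (0:ℝ) < a + 1 := by linarith
  rw [Real.rpow_neg hN0.le, Real.rpow_neg ha1.le]
  have h2 : (2:ℝ) ^ σ * ((a + 1) ^ σ)⁻¹ = (2 / (a + 1)) ^ σ := by
    rw [Real.div_rpow (by norm_num) ha1.le, div_eq_mul_inv]
  have h3 : ((N:ℝ) ^ σ)⁻¹ = (1 / N) ^ σ := by
    rw [Real.div_rpow zero_le_one hN0.le, Real.one_rpow, one_div]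
  rw [h2, h3]
  apply Real.rpow_le_rpow (by positivity) _ hσ.le
  rw [div_le_div_iff₀ hN0 ha1]
  linarith

lemma pair_bound {σ : ℝ} (hσ : 0 < σ) (n₁ n₂ : ℤ) (h₂ : n₂ ≠ 0) :
    ((max n₁.natAbs n₂.natAbs : ℕ) : ℝ) ^ (-(2 * σ)) ≤
      4 ^ σ * (((n₁.natAbs + 1 : ℕ) : ℝ) ^ (-σ) * ((n₂.natAbs + 1 : ℕ) : ℝ) ^ (-σ)) := by
  set N : ℕ := max n₁.natAbs n₂.natAbs with hN
  have hN1 : 1 ≤ (N : ℝ) := by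
    have : 1 ≤ N := le_max_of_le_right (Int.one_le_abs (by exact_mod_cast h₂) |>.trans_eq (Int.abs_eq_natAbs n₂) |> fun h => by
      exact_mod_cast Int.ofNat_le.mp (by exact_mod_cast h))
    exact_mod_cast this
  have hN0 : (0:ℝ) < N := by linarith
  have key : ((N:ℝ)) ^ (-(2*σ)) = (N:ℝ) ^ (-σ) * (N:ℝ) ^ (-σ) := by
    rw [← Real.rpow_add hN0]; ring_nf
  have b1 : (N:ℝ) ^ (-σ) ≤ 2 ^ σ * (((n₁.natAbs : ℕ) : ℝ) + 1) ^ (-σ) :=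
    single_bound hσ (by positivity) (by exact_mod_cast le_max_left _ _) hN1
  have b2 : (N:ℝ) ^ (-σ) ≤ 2 ^ σ * (((n₂.natAbs : ℕ) : ℝ) + 1) ^ (-σ) :=
    single_bound hσ (by positivity) (by exact_mod_cast le_max_right _ _) hN1
  have hnn : (0:ℝ) ≤ (N:ℝ) ^ (-σ) := Real.rpow_nonneg hN0.le _
  calc ((N:ℕ):ℝ) ^ (-(2*σ)) = (N:ℝ) ^ (-σ) * (N:ℝ) ^ (-σ) := key
    _ ≤ (2 ^ σ * (((n₁.natAbs : ℕ) : ℝ) + 1) ^ (-σ)) * (2 ^ σ * (((n₂.natAbs : ℕ) : ℝ) + 1) ^ (-σ)) := by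
        apply mul_le_mul b1 b2 hnn (by positivity)
    _ = 4 ^ σ * (((n₁.natAbs + 1 : ℕ) : ℝ) ^ (-σ) * ((n₂.natAbs + 1 : ℕ) : ℝ) ^ (-σ)) := by
        have h4 : (4:ℝ) ^ σ = 2 ^ σ * 2 ^ σ := by
          rw [← Real.mul_rpow (by norm_num) (by norm_num)]; norm_num
        rw [h4]; push_cast; ring

/-- A pair `(γ, β)` of real numbers is Diophantine. -/
def DiophPair (γ β : ℝ) : Prop :=
  ∃ c ρ : ℝ, 0 < c ∧ 0 < ρ ∧ ∀ n₁ n₂ : ℤ, ¬(n₁ = 0 ∧ n₂ = 0) →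
    nint (n₁ * γ + n₂ * β) ≥ c * ((max n₁.natAbs n₂.natAbs : ℕ) : ℝ) ^ (-ρ)

lemma dioph_shift (γ β : ℝ) (m : ℤ) (h : DiophPair γ (β + m)) : DiophPair γ β := by
  obtain ⟨c, ρ, hc, hρ, hb⟩ := h
  refine ⟨c, ρ, hc, hρ, fun n₁ n₂ hn => ?_⟩
  have := hb n₁ n₂ hn
  have heq : (n₁:ℝ) * γ + n₂ * (β + m) = (n₁ * γ + n₂ * β) + ((n₂ * m : ℤ) : ℝ) := by
    push_cast; ring
  rwa [heq, nint_add_int] at this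

lemma li_of_dioph (γ β : ℝ) (h : DiophPair γ β) : LinearIndependent ℚ ![(1:ℝ), γ, β] := by
  rw [Fintype.linearIndependent_iff]
  intro g hg
  have hg' : (g 0 : ℝ) + g 1 * γ + g 2 * β = 0 := by
    have := hg
    rw [Fin.sum_univ_three] at this
    simpa [Matrix.cons_val_zero, Matrix.cons_val_one, Rat.smul_def] using this
  set m₀ : ℤ := (g 0).num * (g 1).den * (g 2).den with hm₀
  set m₁ : ℤ := (g 1).num * (g 0).den * (g 2).den with hm₁
  set m₂ : ℤ := (g 2).num * (g 0).den * (g 1).den with hm₂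
  have hd0 : ((g 0).den : ℝ) ≠ 0 := by exact_mod_cast (g 0).den_nz
  have hd1 : ((g 1).den : ℝ) ≠ 0 := by exact_mod_cast (g 1).den_nz
  have hd2 : ((g 2).den : ℝ) ≠ 0 := by exact_mod_cast (g 2).den_nz
  have key : (m₀ : ℝ) + m₁ * γ + m₂ * β = 0 := by
    have e0 : ((g 0 : ℚ) : ℝ) = ((g 0).num : ℝ) / ((g 0).den : ℝ) := by
      rw [Rat.cast_def]
    have e1 : ((g 1 : ℚ) : ℝ) = ((g 1).num : ℝ) / ((g 1).den : ℝ) := by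
      rw [Rat.cast_def]
    have e2 : ((g 2 : ℚ) : ℝ) = ((g 2).num : ℝ) / ((g 2).den : ℝ) := by
      rw [Rat.cast_def]
    rw [e0, e1, e2] at hg'
    have := mul_eq_zero_of_left hg' (((g 0).den : ℝ) * (g 1).den * (g 2).den)
    rw [hm₀, hm₁, hm₂]
    push_cast
    field_simp at this
    linarith [this]
  have h12 : m₁ = 0 ∧ m₂ = 0 := by
    by_contra hcon
    obtain ⟨c, ρ, hc, hρ, hb⟩ := h
    have hb' := hb m₁ m₂ hcon
    have hzero : nint ((m₁:ℝ) * γ + (m₂:ℝ) * β) = 0 := by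
      have : (m₁:ℝ) * γ + (m₂:ℝ) * β = -(m₀ : ℝ) := by linarith
      rw [this, ← Int.cast_neg, nint_intCast]
    have hpos : (0:ℝ) < c * ((max m₁.natAbs m₂.natAbs : ℕ) : ℝ) ^ (-ρ) := by
      apply mul_pos hc
      apply Real.rpow_pos_of_pos
      have : 0 < max m₁.natAbs m₂.natAbs := by
        rcases Decidable.not_and_iff_or_not.mp hcon with h1 | h1
        · exact lt_max_of_lt_left (Int.natAbs_pos.mpr h1)
        · exact lt_max_of_lt_right (Int.natAbs_pos.mpr h1)
      exact_mod_cast this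
    rw [hzero] at hb'
    linarith
  have hg1 : g 1 = 0 := by
    have h' := h12.1
    rw [hm₁, mul_eq_zero, mul_eq_zero] at h'
    rcases h' with (h'|h')|h'
    · exact Rat.num_eq_zero.mp h'
    · exact absurd h' (by exact_mod_cast (g 0).den_nz)
    · exact absurd h' (by exact_mod_cast (g 2).den_nz)
  have hg2 : g 2 = 0 := by
    have h' := h12.2
    rw [hm₂, mul_eq_zero, mul_eq_zero] at h'
    rcases h' with (h'|h')|h'
    · exact Rat.num_eq_zero.mp h'
    · exact absurd h' (by exact_mod_cast (g 0).den_nz)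
    · exact absurd h' (by exact_mod_cast (g 1).den_nz)
  have hg0 : g 0 = 0 := by
    have hm0 : (m₀ : ℝ) = 0 := by
      rw [h12.1, h12.2] at key
      push_cast at key
      linarith
    have hm0' : m₀ = 0 := by exact_mod_cast hm0
    rw [hm₀, mul_eq_zero, mul_eq_zero] at hm0'
    rcases hm0' with (h'|h')|h'
    · exact Rat.num_eq_zero.mp h'
    · exact absurd h' (by exact_mod_cast (g 1).den_nz)
    · exact absurd h' (by exact_mod_cast (g 2).den_nz)
  intro i
  fin_cases i
  · exact hg0
  · exact hg1
  · exact hg2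

lemma nint_int_mul (n : ℤ) (γ : ℝ) : nint ((n:ℝ) * γ) = nint ((n.natAbs : ℕ) * γ) := by
  have h : ((n.natAbs : ℕ) : ℝ) = |(n:ℝ)| := by
    rw [Nat.cast_natAbs]; push_cast; rfl
  rw [h]
  rcases abs_choice ((n:ℝ)) with h' | h'
  · rw [h']
  · rw [h', neg_mul, nint_neg]

lemma Tp_bound (γ c₀ α : ℝ) (hc₀ : 0 < c₀) (hα : 0 < α)
    (hdio : ∀ n : ℕ, 0 < n → nint (n * γ) ≥ c₀ * (n:ℝ) ^ (-α))
    (c : ℝ) (hc : 0 < c) (hcc : c ≤ c₀) (p : ℤ × ℤ) :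
    volume {β : ℝ | β ∈ Set.Ico (0:ℝ) 1 ∧ ¬(p.1 = 0 ∧ p.2 = 0) ∧
        nint (p.1 * γ + p.2 * β) <
          c * ((max p.1.natAbs p.2.natAbs : ℕ) : ℝ) ^ (-(2 * ((α+3)/2)))}
      ≤ ENNReal.ofReal c * ENNReal.ofReal (12 * 4 ^ ((α+3)/2)) *
        (ENNReal.ofReal (((p.1.natAbs + 1 : ℕ) : ℝ) ^ (-((α+3)/2))) *
         ENNReal.ofReal (((p.2.natAbs + 1 : ℕ) : ℝ) ^ (-((α+3)/2)))) := by
  set σ : ℝ := (α+3)/2 with hσdef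
  have hσ0 : 0 < σ := by rw [hσdef]; linarith
  rcases eq_or_ne p.2 0 with h2 | h2
  · have hempty : {β : ℝ | β ∈ Set.Ico (0:ℝ) 1 ∧ ¬(p.1 = 0 ∧ p.2 = 0) ∧
        nint (p.1 * γ + p.2 * β) <
          c * ((max p.1.natAbs p.2.natAbs : ℕ) : ℝ) ^ (-(2 * σ))} = ∅ := by
      apply Set.eq_empty_iff_forall_notMem.mpr
      rintro β ⟨-, hne, hlt⟩
      have hp1 : p.1 ≠ 0 := fun h => hne ⟨h, h2⟩
      have hA1 : 1 ≤ (p.1.natAbs : ℝ) := by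
        have : 1 ≤ p.1.natAbs := Int.natAbs_pos.mpr hp1
        exact_mod_cast this
      rw [h2] at hlt
      simp only [Int.natAbs_zero, Int.cast_zero, zero_mul, add_zero, max_eq_left (Nat.zero_le _)] at hlt
      rw [nint_int_mul] at hlt
      have hlow := hdio p.1.natAbs (Int.natAbs_pos.mpr hp1)
      have hcomp : c * ((p.1.natAbs : ℕ) : ℝ) ^ (-(2 * σ)) ≤ c₀ * ((p.1.natAbs : ℕ) : ℝ) ^ (-α) := by
        apply mul_le_mul hcc _ (Real.rpow_nonneg (by positivity) _) hc₀.le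
        apply Real.rpow_le_rpow_of_exponent_le hA1
        rw [hσdef]; linarith
      linarith [hlow, hlt, hcomp]
    rw [hempty, measure_empty]
    exact zero_le
  · set M : ℝ := ((max p.1.natAbs p.2.natAbs : ℕ) : ℝ) with hM
    have hM1 : 1 ≤ M := by
      have h' : 1 ≤ max p.1.natAbs p.2.natAbs := le_max_of_le_right (Int.natAbs_pos.mpr h2)
      rw [hM]
      exact_mod_cast h'
    set ε : ℝ := c * M ^ (-(2 * σ)) with hε
    have hεpos : 0 < ε := mul_pos hc (Real.rpow_pos_of_pos (by linarith) _)
    have ha : 1 ≤ |(p.2 : ℝ)| := by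
      have : 1 ≤ (p.2.natAbs : ℝ) := by
        have : 1 ≤ p.2.natAbs := Int.natAbs_pos.mpr h2
        exact_mod_cast this
      rwa [Nat.cast_natAbs, Int.cast_abs] at this
    have hsub : {β : ℝ | β ∈ Set.Ico (0:ℝ) 1 ∧ ¬(p.1 = 0 ∧ p.2 = 0) ∧
        nint (p.1 * γ + p.2 * β) < c * M ^ (-(2 * σ))} ⊆
        {β : ℝ | β ∈ Set.Ico (0:ℝ) 1 ∧ nint ((p.1 : ℝ) * γ + (p.2 : ℝ) * β) < ε} := by
      rintro β ⟨h1, -, h3⟩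
      exact ⟨h1, h3⟩
    calc volume {β : ℝ | β ∈ Set.Ico (0:ℝ) 1 ∧ ¬(p.1 = 0 ∧ p.2 = 0) ∧
        nint (p.1 * γ + p.2 * β) < c * M ^ (-(2 * σ))}
        ≤ volume {β : ℝ | β ∈ Set.Ico (0:ℝ) 1 ∧ nint ((p.1 : ℝ) * γ + (p.2 : ℝ) * β) < ε} :=
          measure_mono hsub
      _ ≤ ENNReal.ofReal (12 * ε) := volume_nint_lt ((p.1:ℝ) * γ) ((p.2:ℝ)) ε ha hεpos
      _ ≤ ENNReal.ofReal ((c * (12 * 4 ^ σ)) * ((((p.1.natAbs + 1 : ℕ) : ℝ) ^ (-σ)) * (((p.2.natAbs + 1 : ℕ) : ℝ) ^ (-σ)))) := by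
          apply ENNReal.ofReal_le_ofReal
          have pb := pair_bound hσ0 p.1 p.2 h2
          have h12 : 12 * ε ≤ 12 * (c * (4 ^ σ * ((((p.1.natAbs + 1 : ℕ) : ℝ) ^ (-σ)) * (((p.2.natAbs + 1 : ℕ) : ℝ) ^ (-σ))))) := by
            apply mul_le_mul_of_nonneg_left _ (by norm_num : (0:ℝ) ≤ 12)
            rw [hε]
            exact mul_le_mul_of_nonneg_left pb hc.le
          calc (12:ℝ) * ε ≤ _ := h12
            _ = (c * (12 * 4 ^ σ)) * ((((p.1.natAbs + 1 : ℕ) : ℝ) ^ (-σ)) * (((p.2.natAbs + 1 : ℕ) : ℝ) ^ (-σ))) := by ring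
      _ = ENNReal.ofReal c * ENNReal.ofReal (12 * 4 ^ σ) *
        (ENNReal.ofReal (((p.1.natAbs + 1 : ℕ) : ℝ) ^ (-σ)) *
         ENNReal.ofReal (((p.2.natAbs + 1 : ℕ) : ℝ) ^ (-σ))) := by
          rw [ENNReal.ofReal_mul (by positivity), ENNReal.ofReal_mul hc.le,
            ENNReal.ofReal_mul (Real.rpow_nonneg (by positivity) _)]

theorem stmt10 (γ : ℝ) (hγ : Irrational γ)
    (hNL : ∃ c α : ℝ, 0 < c ∧ 0 < α ∧ ∀ n : ℕ, 0 < n → nint (n * γ) ≥ c * (n : ℝ) ^ (-α)) :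
    ∀ᵐ β : ℝ ∂volume, LinearIndependent ℚ ![(1:ℝ), γ, β] ∧ DiophPair γ β := by
  obtain ⟨c₀, α, hc₀, hα, hdio⟩ := hNL
  have main : ∀ᵐ β : ℝ ∂volume, DiophPair γ β := by
    rw [ae_iff]
    set S : Set ℝ := {β | ¬ DiophPair γ β} with hS
    show volume S = 0
    set σ : ℝ := (α+3)/2 with hσdef
    have hσ0 : 0 < σ := by rw [hσdef]; linarith
    have hσ1 : 1 < σ := by rw [hσdef]; linarith
    set f : ℤ → ℝ≥0∞ := fun n => ENNReal.ofReal (((n.natAbs + 1 : ℕ) : ℝ) ^ (-σ)) with hf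
    set F : ℝ≥0∞ := ∑' n : ℤ, f n with hF
    have hFtop : F ≠ ⊤ := by
      rw [hF, hf, ← ENNReal.ofReal_tsum_of_nonneg
        (fun n => Real.rpow_nonneg (by positivity) _) (summable_f hσ1)]
      exact ENNReal.ofReal_ne_top
    set K : ℝ≥0∞ := ENNReal.ofReal (12 * 4 ^ σ) * (F * F) with hK
    have hKtop : K ≠ ⊤ := by
      rw [hK]
      exact ENNReal.mul_ne_top ENNReal.ofReal_ne_top (ENNReal.mul_ne_top hFtop hFtop)
    -- measure of S on the unit interval
    have hunit : volume (S ∩ Set.Ico (0:ℝ) 1) = 0 := by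
      have key : ∀ k : ℕ, volume (S ∩ Set.Ico (0:ℝ) 1) ≤
          ENNReal.ofReal ((k+1:ℝ)⁻¹) * K := by
        intro k
        set c : ℝ := min c₀ ((k+1:ℝ)⁻¹) with hcdef
        have hc : 0 < c := lt_min hc₀ (by positivity)
        have hcc : c ≤ c₀ := min_le_left _ _
        have hck : c ≤ (k+1:ℝ)⁻¹ := min_le_right _ _
        set T : ℤ × ℤ → Set ℝ := fun p => {β : ℝ | β ∈ Set.Ico (0:ℝ) 1 ∧ ¬(p.1 = 0 ∧ p.2 = 0) ∧
          nint (p.1 * γ + p.2 * β) <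
            c * ((max p.1.natAbs p.2.natAbs : ℕ) : ℝ) ^ (-(2 * σ))} with hT
        have hsub : S ∩ Set.Ico (0:ℝ) 1 ⊆ ⋃ p : ℤ × ℤ, T p := by
          rintro β ⟨hβS, hβI⟩
          have hnd : ¬ DiophPair γ β := hβS
          rw [DiophPair] at hnd
          push_neg at hnd
          obtain ⟨n₁, n₂, hn, hlt⟩ := hnd c (2 * σ) hc (by linarith)
          exact Set.mem_iUnion.mpr ⟨(n₁, n₂), hβI, fun hb => hn hb.1 hb.2, hlt⟩
        calc volume (S ∩ Set.Ico (0:ℝ) 1) ≤ ∑' p : ℤ × ℤ, volume (T p) :=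
              (measure_mono hsub).trans (measure_iUnion_le _)
          _ ≤ ∑' p : ℤ × ℤ, (ENNReal.ofReal c * ENNReal.ofReal (12 * 4 ^ σ) * (f p.1 * f p.2)) := by
              apply ENNReal.tsum_le_tsum
              intro p
              exact Tp_bound γ c₀ α hc₀ hα hdio c hc hcc p
          _ = ENNReal.ofReal c * K := by
              rw [ENNReal.tsum_prod']
              have : ∀ a : ℤ, ∑' b : ℤ, (ENNReal.ofReal c * ENNReal.ofReal (12 * 4 ^ σ) * (f a * f b))
                  = ENNReal.ofReal c * ENNReal.ofReal (12 * 4 ^ σ) * f a * F := by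
                intro a
                rw [← ENNReal.tsum_mul_left]
                congr 1
                ext b
                ring
              rw [tsum_congr this, ENNReal.tsum_mul_right, ENNReal.tsum_mul_left, ← hF, hK]
              ring
          _ ≤ ENNReal.ofReal ((k+1:ℝ)⁻¹) * K :=
              mul_le_mul_left (ENNReal.ofReal_le_ofReal hck) _
      have htend : Filter.Tendsto (fun k : ℕ => ENNReal.ofReal ((k+1:ℝ)⁻¹) * K)
          Filter.atTop (nhds 0) := by
        have h1 : Filter.Tendsto (fun k : ℕ => ENNReal.ofReal ((k+1:ℝ)⁻¹))
            Filter.atTop (nhds 0) := by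
          rw [show (0 : ℝ≥0∞) = ENNReal.ofReal 0 by simp]
          apply ENNReal.tendsto_ofReal
          have := tendsto_one_div_add_atTop_nhds_zero_nat (𝕜 := ℝ)
          simpa [one_div] using this
        simpa using ENNReal.Tendsto.mul_const h1 (Or.inr hKtop)
      have := ge_of_tendsto' htend key
      exact le_antisymm this zero_le
    -- cover ℝ by integer translates
    have hshift : ∀ m : ℤ, volume (S ∩ Set.Ico (m:ℝ) (m+1)) = 0 := by
      intro m
      refine le_antisymm ?_ zero_le
      have hsub : S ∩ Set.Ico (m:ℝ) (m+1) ⊆ (fun β => (-(m:ℝ)) + β) ⁻¹' (S ∩ Set.Ico 0 1) := by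
        rintro β ⟨hβS, hβ0, hβ1⟩
        constructor
        · show ¬ DiophPair γ (-(m:ℝ) + β)
          intro hd
          apply hβS
          show DiophPair γ β
          apply dioph_shift γ β (-m)
          have : β + ((-m : ℤ) : ℝ) = -(m:ℝ) + β := by push_cast; ring
          rwa [this]
        · constructor
          · show (0:ℝ) ≤ -(m:ℝ) + β; linarith
          · show -(m:ℝ) + β < 1; linarith
      calc volume (S ∩ Set.Ico (m:ℝ) (m+1))
          ≤ volume ((fun β => (-(m:ℝ)) + β) ⁻¹' (S ∩ Set.Ico 0 1)) := measure_mono hsub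
        _ = volume (S ∩ Set.Ico 0 1) := measure_preimage_add volume _ _
        _ = 0 := hunit
        _ ≤ 0 := le_refl _
    have hcover : S ⊆ ⋃ m : ℤ, S ∩ Set.Ico (m:ℝ) (m+1) := by
      intro β hβ
      have : β ∈ ⋃ m : ℤ, Set.Ico (m:ℝ) (m+1) := by
        rw [iUnion_Ico_intCast]; trivial
      obtain ⟨m, hm⟩ := Set.mem_iUnion.mp this
      exact Set.mem_iUnion.mpr ⟨m, hβ, hm⟩
    have : volume S ≤ ∑' m : ℤ, volume (S ∩ Set.Ico (m:ℝ) (m+1)) :=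
      (measure_mono hcover).trans (measure_iUnion_le _)
    rw [tsum_congr hshift] at this
    simpa using le_antisymm (this.trans_eq (by simp)) zero_le
  filter_upwards [main] with β hβ
  exact ⟨li_of_dioph γ β hβ, hβ⟩
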